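/- Let s ≥ 2, t ≥ 3 and m ≥ 2 be integers, let n = sm, and fix an element x ∈ [n]. Then the family F consisting of all subsets of [n] of size at least m together with all subsets of size m-1 that do not contain x is K_{s×t}-free. Consequently vex(n, K_{s×t}) ≥ Σ_{i=m}^{n} C(n,i) + C(n-1, m-1). -/

import Mathlib

open Finset

/-- The family `F` of subsets of `[n]` contains a copy of the complete `s`-partite
graph `K_{s×t}` (all parts of size `t`) in the Kneser cube: there are `s·t` pairwise
distinct members `A j i ∈ F` such that sets belonging to different groups `j ≠ j'`
are disjoint. -/
def containsKst (n s t : ℕ) (F : Finset (Finset (Fin n))) : Prop :=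
  ∃ A : Fin s → Fin t → Finset (Fin n),
    (∀ j i, A j i ∈ F) ∧
    Function.Injective (fun p : Fin s × Fin t => A p.1 p.2) ∧
    ∀ j j' : Fin s, j ≠ j' → ∀ i i' : Fin t, Disjoint (A j i) (A j' i')

/-- `vexKst n s t` : the maximum size of a `K_{s×t}`-free family of subsets of `[n]`. -/
noncomputable def vexKst (n s t : ℕ) : ℕ :=
  sSup {k | ∃ F : Finset (Finset (Fin n)), ¬ containsKst n s t F ∧ F.card = k}

/-- for `n = sm`, `t ≥ 3`, the family of all subsets of size at least `m`
together with all subsets of size `m-1` not containing a fixed element `x` is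
`K_{s×t}`-free, hence `vex(n, K_{s×t}) ≥ Σ_{i=m}^n C(n,i) + C(n-1, m-1)`. -/
theorem stmt2 (s t m n : ℕ) (hs : 2 ≤ s) (ht : 3 ≤ t) (hm : 2 ≤ m)
    (hn : n = s * m) (x : Fin n) :
    ¬ containsKst n s t
        (univ.filter fun X : Finset (Fin n) =>
          m ≤ X.card ∨ (X.card = m - 1 ∧ x ∉ X)) ∧
      (∑ i ∈ Finset.Icc m n, n.choose i) + (n - 1).choose (m - 1) ≤ vexKst n s t := by
  have hfree : ¬ containsKst n s t
      (univ.filter fun X : Finset (Fin n) =>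
        m ≤ X.card ∨ (X.card = m - 1 ∧ x ∉ X)) := by
    rintro ⟨A, hmem, hinj, hdisj⟩
    set V : Fin s → Finset (Fin n) := fun j => univ.biUnion (A j) with hV
    have hsub : ∀ j i, A j i ⊆ V j := fun j i => subset_biUnion_of_mem _ (mem_univ i)
    have hcard_ge : ∀ j i, m - 1 ≤ (A j i).card := by
      intro j i
      have h := hmem j i
      simp only [mem_filter] at h
      rcases h.2 with h | h <;> omega
    have hVdisj : ∀ j j', j ≠ j' → Disjoint (V j) (V j') := by
      intro j j' hjj
      rw [hV]
      rw [Finset.disjoint_biUnion_left]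
      intro i _
      rw [Finset.disjoint_biUnion_right]
      intro i' _
      exact hdisj j j' hjj i i'
    -- each group's union has at least m elements
    have hm_le : ∀ j, m ≤ (V j).card := by
      intro j
      by_contra hc
      push_neg at hc
      have heq : ∀ i : Fin t, A j i = V j := by
        intro i
        exact Finset.eq_of_subset_of_card_le (hsub j i) (by have := hcard_ge j i; omega)
      have h01 : A j ⟨0, by omega⟩ = A j ⟨1, by omega⟩ := by
        rw [heq, heq]
      have := hinj (a₁ := (j, ⟨0, by omega⟩)) (a₂ := (j, ⟨1, by omega⟩)) h01
      simp [Prod.ext_iff, Fin.ext_iff] at this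
    -- total size bound
    have hsum_le : ∑ j, (V j).card ≤ n := by
      have hcb : (univ.biUnion V).card = ∑ j, (V j).card :=
        Finset.card_biUnion (fun j _ j' _ h => hVdisj j j' h)
      calc ∑ j, (V j).card = (univ.biUnion V).card := hcb.symm
        _ ≤ (univ : Finset (Fin n)).card := Finset.card_le_univ _
        _ = n := by simp
    have hsum_ge : n ≤ ∑ j, (V j).card := by
      calc n = s * m := hn
        _ = ∑ _j : Fin s, m := by simp [mul_comm]
        _ ≤ ∑ j, (V j).card := Finset.sum_le_sum (fun j _ => hm_le j)
    -- each V j has exactly m elements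
    have hcard_eq : ∀ j, (V j).card = m := by
      intro j
      by_contra hne
      have hlt : m < (V j).card := lt_of_le_of_ne (hm_le j) (Ne.symm hne)
      have : (∑ _j : Fin s, m) < ∑ j, (V j).card :=
        Finset.sum_lt_sum (fun j _ => hm_le j) ⟨j, mem_univ j, hlt⟩
      simp [mul_comm] at this
      omega
    -- the union is everything, so x lies in some V j₀
    have huniv : univ.biUnion V = univ := by
      apply Finset.eq_univ_of_card
      rw [Finset.card_biUnion (fun j _ j' _ h => hVdisj j j' h)]
      simp [hcard_eq, mul_comm, hn]
    obtain ⟨j₀, _, hxV⟩ := Finset.mem_biUnion.1 (huniv ▸ mem_univ x)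
    -- every set in group j₀ is V j₀ or V j₀ \ {x}
    have hclaim : ∀ i : Fin t, A j₀ i = V j₀ ∨ A j₀ i = (V j₀).erase x := by
      intro i
      have h := hmem j₀ i
      simp only [mem_filter] at h
      rcases h.2 with h | h
      · left
        exact (Finset.eq_of_subset_of_card_le (hsub j₀ i)
          (by rw [hcard_eq j₀]; exact h)).symm ▸ rfl
      · right
        have hsub' : A j₀ i ⊆ (V j₀).erase x :=
          Finset.subset_erase.2 ⟨hsub j₀ i, h.2⟩
        have hce : ((V j₀).erase x).card = m - 1 := by
          rw [Finset.card_erase_of_mem hxV, hcard_eq j₀]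
        exact Finset.eq_of_subset_of_card_le hsub' (by omega)
    -- pigeonhole among t ≥ 3 sets, only 2 possible values
    have hpig : ∃ i i' : Fin t, i ≠ i' ∧ A j₀ i = A j₀ i' := by
      obtain ⟨i, i', hne, hgg⟩ := Fintype.exists_ne_map_eq_of_card_lt
        (fun i : Fin t => decide (A j₀ i = V j₀)) (by simp; omega)
      refine ⟨i, i', hne, ?_⟩
      have hiff := decide_eq_decide.1 hgg
      have hVne : V j₀ ≠ (V j₀).erase x := fun h => (Finset.notMem_erase x _) (h ▸ hxV)
      rcases hclaim i with h1 | h1 <;> rcases hclaim i' with h2 | h2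
      · rw [h1, h2]
      · exact absurd ((hiff.1 h1).symm.trans h2) hVne
      · exact absurd ((hiff.2 h2).symm.trans h1) hVne
      · rw [h1, h2]
    obtain ⟨i, i', hne, heq⟩ := hpig
    have := hinj (a₁ := (j₀, i)) (a₂ := (j₀, i')) heq
    simp [Prod.ext_iff] at this
    exact hne this
  refine ⟨hfree, ?_⟩
  -- cardinality of the family
  have hcard : (univ.filter fun X : Finset (Fin n) =>
      m ≤ X.card ∨ (X.card = m - 1 ∧ x ∉ X)).card
      = (∑ i ∈ Finset.Icc m n, n.choose i) + (n - 1).choose (m - 1) := by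
    rw [Finset.filter_or]
    rw [Finset.card_union_of_disjoint]
    · congr 1
      · -- sets of size ≥ m
        have hsplit : (univ.filter fun X : Finset (Fin n) => m ≤ X.card)
            = (Finset.Icc m n).biUnion
                (fun i => Finset.powersetCard i (univ : Finset (Fin n))) := by
          ext X
          simp only [mem_filter, mem_univ, true_and, mem_biUnion, mem_Icc,
            Finset.mem_powersetCard]
          constructor
          · intro h
            exact ⟨X.card, ⟨h, by simpa using Finset.card_le_univ X⟩, subset_univ X, rfl⟩
          · rintro ⟨i, ⟨h1, _⟩, _, rfl⟩
            exact h1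
        rw [hsplit, Finset.card_biUnion]
        · refine Finset.sum_congr rfl fun i _ => ?_
          rw [Finset.card_powersetCard]
          simp
        · intro i _ i' _ hii
          rw [Function.onFun, Finset.disjoint_left]
          intro X hX hX'
          rw [Finset.mem_powersetCard] at hX hX'
          exact hii (hX.2.symm.trans hX'.2)
      · -- sets of size m-1 avoiding x
        have hsplit : (univ.filter fun X : Finset (Fin n) => X.card = m - 1 ∧ x ∉ X)
            = Finset.powersetCard (m - 1) ((univ : Finset (Fin n)).erase x) := by
          ext X
          simp only [mem_filter, mem_univ, true_and, Finset.mem_powersetCard,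
            Finset.subset_erase, subset_univ, true_and]
          tauto
        rw [hsplit, Finset.card_powersetCard, Finset.card_erase_of_mem (mem_univ x)]
        simp
    · rw [Finset.disjoint_filter]
      intro X _ hX hX'
      omega
  rw [← hcard, vexKst]
  apply le_csSup
  · refine ⟨Fintype.card (Finset (Fin n)), ?_⟩
    rintro k ⟨F, -, rfl⟩
    exact Finset.card_le_univ F
  · exact ⟨_, hfree, rfl⟩
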